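/- Let k ≥ 1 and A ≥ 5 be integers with A ≡ 1 (mod 4). Then the polynomial f(x) = x^{2^{k+1}} + A x^{2^k} + A is not monogenic. -/

import Mathlib

open Polynomial

/-- The discriminant of a monic integer polynomial, computed as the product of the
squared differences of its complex roots (listed with multiplicity). -/
noncomputable def polyDisc (f : Polynomial ℤ) : ℂ :=
  let l := ((f.map (Int.castRingHom ℂ)).roots).toList
  ∏ i ∈ Finset.range l.length, ∏ j ∈ Finset.range l.length,
    if i < j then (l.getD i 0 - l.getD j 0) ^ 2 else 1

/-- `f` is monogenic: monic, irreducible over `ℚ`, and `ℤ[θ] = 𝓞_K` for `K = ℚ(θ)`,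
`θ` a root of `f`. -/
def IsMonogenic (f : Polynomial ℤ) : Prop :=
  f.Monic ∧ Irreducible (f.map (Int.castRingHom ℚ)) ∧
  Algebra.adjoin ℤ {AdjoinRoot.root (f.map (Int.castRingHom ℚ))} =
    integralClosure ℤ (AdjoinRoot (f.map (Int.castRingHom ℚ)))

/-- The discriminant of `f` is an integer which is not squarefree. -/
def DiscNonSquarefree (f : Polynomial ℤ) : Prop :=
  ∃ d : ℤ, (d : ℂ) = polyDisc f ∧ ¬ Squarefree d

/-- The trinomial `x^n + A x^m + A`. -/
noncomputable def trinomialAA (n m : ℕ) (A : ℤ) : Polynomial ℤ :=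
  Polynomial.X ^ n + Polynomial.C A * Polynomial.X ^ m + Polynomial.C A

theorem not_monogenic_pow_two_A_cong_one
    (k : ℕ) (hk : 1 ≤ k) (A : ℤ) (hA : 5 ≤ A) (hA4 : A % 4 = 1) :
    ¬ IsMonogenic (trinomialAA (2 ^ (k + 1)) (2 ^ k) A) := by
  rintro ⟨hmonic, hirr, hadj⟩
  obtain ⟨j, rfl⟩ : ∃ j, k = j + 1 := ⟨k - 1, by omega⟩
  obtain ⟨B, rfl⟩ : ∃ B, A = 4 * B + 1 := ⟨A / 4, by omega⟩
  set f : Polynomial ℤ := trinomialAA (2 ^ (j + 1 + 1)) (2 ^ (j + 1)) (4 * B + 1) with hf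
  set q : Polynomial ℚ := f.map (Int.castRingHom ℚ) with hq
  haveI : Fact (Irreducible q) := ⟨hirr⟩
  set θ : AdjoinRoot q := AdjoinRoot.root q with hθ
  have hroot : θ ^ (2 ^ (j + 1 + 1)) + ((4 * B + 1 : ℤ) : AdjoinRoot q) * θ ^ (2 ^ (j + 1))
      + ((4 * B + 1 : ℤ) : AdjoinRoot q) = 0 := by
    have h0 : (aeval θ) q = 0 := by rw [hθ, aeval_def]; exact AdjoinRoot.eval₂_root q
    have h0' : (aeval θ) f = 0 := by
      rw [← aeval_map_algebraMap ℚ θ f, algebraMap_int_eq]; exact h0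
    simp only [hf, trinomialAA] at h0'
    rw [map_add, map_add, map_mul, map_pow, map_pow, aeval_X, aeval_C, eq_intCast] at h0'
    exact h0'
  have h2j : (0 : ℕ) < 2 ^ j := Nat.pow_pos (by norm_num)
  have e1 : 2 ^ (j + 1) * 2 = 2 ^ (j + 1 + 1) := (pow_succ 2 (j + 1)).symm
  have e2 : (3 * 2 ^ j) * 2 = 2 ^ (j + 1) * 3 := by rw [pow_succ 2 j]; ring
  set u : AdjoinRoot q := θ ^ (2 ^ (j + 1)) with hu
  set w : AdjoinRoot q := θ ^ (3 * 2 ^ j) with hw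
  have hu2 : u ^ 2 = θ ^ (2 ^ (j + 1 + 1)) := by rw [hu, ← pow_mul, e1]
  have hw2 : w ^ 2 = u ^ 3 := by rw [hw, hu, ← pow_mul, ← pow_mul, e2]
  have hw4 : w ^ 4 = u ^ 6 := by
    rw [show (4 : ℕ) = 2 * 2 from rfl, pow_mul, hw2, ← pow_mul]
  have hb : u ^ 2 + ((4 * B + 1 : ℤ) : AdjoinRoot q) * u + ((4 * B + 1 : ℤ) : AdjoinRoot q) = 0 := by
    rw [hu2]; exact hroot
  have key : w ^ 4 + (((64 * B ^ 3 - 12 * B - 2 : ℤ)) : AdjoinRoot q) * w ^ 2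
      + (((64 * B ^ 3 + 48 * B ^ 2 + 12 * B + 1 : ℤ)) : AdjoinRoot q) = 0 := by
    push_cast
    push_cast at hb
    linear_combination hw4
      + ((64 : AdjoinRoot q) * (B : AdjoinRoot q) ^ 3 - 12 * (B : AdjoinRoot q) - 2) * hw2
      + ((u ^ 4 - (4 * (B : AdjoinRoot q) + 1) * u ^ 3
        + ((4 * (B : AdjoinRoot q) + 1) ^ 2 - (4 * (B : AdjoinRoot q) + 1)) * u ^ 2
        - (4 * (B : AdjoinRoot q) + 1) ^ 2 * u + (4 * (B : AdjoinRoot q) + 1) ^ 2)) * hb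
  haveI : CharZero (AdjoinRoot q) := charZero_of_injective_algebraMap
    (algebraMap ℚ (AdjoinRoot q)).injective
  set α : AdjoinRoot q := (1 + w) / 2 with hα
  have hα16 : α * 2 = 1 + w := by rw [hα]; field_simp
  have key' := key
  push_cast at key'
  have hαint : IsIntegral ℤ α := by
    refine ⟨X ^ 4 + (C (-2) * X ^ 3 + C (16 * B ^ 3 - 3 * B + 1) * X ^ 2
      + C (3 * B - 16 * B ^ 3) * X + C (8 * B ^ 3 + 3 * B ^ 2)), ?_, ?_⟩
    · apply monic_X_pow_add
      apply lt_of_le_of_lt (b := (3 : WithBot ℕ))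
      · compute_degree
      · norm_num
    · simp only [eval₂_add, eval₂_mul, eval₂_pow, eval₂_X, eval₂_C]
      simp only [eq_intCast]
      push_cast
      linear_combination (1 / 16 : AdjoinRoot q) * key' +
        ((1 / 16 : AdjoinRoot q) * ((2 * α - 1 + w) * ((2 * α - 1) ^ 2 + w ^ 2)
          + (64 * (B : AdjoinRoot q) ^ 3 - 12 * (B : AdjoinRoot q) - 2) * (2 * α - 1 + w))) * hα16
  have hmem : α ∈ Algebra.adjoin ℤ {θ} := by rw [hθ, hadj]; exact hαint
  rw [Algebra.adjoin_singleton_eq_range_aeval] at hmem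
  obtain ⟨p, hp⟩ := hmem
  have hmkp : AdjoinRoot.mk q (p.map (Int.castRingHom ℚ)) = α := by
    rw [← AdjoinRoot.aeval_eq, ← algebraMap_int_eq, aeval_map_algebraMap]
    exact hp
  set v : Polynomial ℚ := C (2⁻¹ : ℚ) * (1 + X ^ (3 * 2 ^ j)) with hv
  have hofhalf : (AdjoinRoot.of q) (2⁻¹ : ℚ) = (2 : AdjoinRoot q)⁻¹ := by
    rw [← AdjoinRoot.algebraMap_eq, map_inv₀, map_ofNat]
  have hmkv : AdjoinRoot.mk q v = α := by
    rw [hv, map_mul, map_add, map_one, map_pow, AdjoinRoot.mk_X, AdjoinRoot.mk_C]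
    rw [hofhalf, ← hθ, ← hw, hα, inv_mul_eq_div]
  have hdvd : q ∣ p.map (Int.castRingHom ℚ) - v := by
    rw [← AdjoinRoot.mk_eq_zero, map_sub, hmkp, hmkv, sub_self]
  have hqmonic : q.Monic := hmonic.map _
  have hdegv : v.degree ≤ ((3 * 2 ^ j : ℕ) : WithBot ℕ) := by
    rw [hv]
    refine le_trans (degree_mul_le _ _) ?_
    refine le_trans (add_le_add degree_C_le (degree_add_le _ _)) ?_
    rw [degree_one, degree_X_pow, zero_add]
    exact max_le (by exact_mod_cast Nat.zero_le _) le_rfl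
  have hne1 : (2 : ℕ) ^ (j + 1) ≠ 2 ^ (j + 1 + 1) := by
    have : (2 : ℕ) ^ (j + 1) < 2 ^ (j + 1 + 1) := by
      rw [← e1]; omega
    omega
  have hne0 : (2 : ℕ) ^ (j + 1 + 1) ≠ 0 := by positivity
  have hcoefN : q.coeff (2 ^ (j + 1 + 1)) = 1 := by
    rw [hq, coeff_map, hf]
    simp only [trinomialAA, coeff_add, coeff_C_mul, coeff_X_pow, coeff_C,
      if_pos rfl, if_neg (Ne.symm hne1), if_neg hne0]
    norm_num
  have hdegq : ((2 ^ (j + 1 + 1) : ℕ) : WithBot ℕ) ≤ q.degree :=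
    le_degree_of_ne_zero (by rw [hcoefN]; norm_num)
  have hmN : ((3 * 2 ^ j : ℕ) : WithBot ℕ) < ((2 ^ (j + 1 + 1) : ℕ) : WithBot ℕ) := by
    have : (3 * 2 ^ j : ℕ) < 2 ^ (j + 1 + 1) := by
      rw [← e1, pow_succ 2 j]; omega
    exact_mod_cast this
  have hvq : v.degree < q.degree := lt_of_le_of_lt hdegv (lt_of_lt_of_le hmN hdegq)
  have hrmod : (p %ₘ f).map (Int.castRingHom ℚ) = v := by
    rw [map_modByMonic _ hmonic, ← hq]
    obtain ⟨c, hc⟩ := hdvd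
    have hpv : p.map (Int.castRingHom ℚ) = v + q * c := by linear_combination hc
    rw [hpv, add_modByMonic, (modByMonic_eq_zero_iff_dvd hqmonic).mpr ⟨c, rfl⟩,
      (modByMonic_eq_self_iff hqmonic).mpr hvq, add_zero]
  have hm0 : 3 * 2 ^ j ≠ 0 := by positivity
  have hc0 : (((p %ₘ f).coeff 0 : ℤ) : ℚ) = 2⁻¹ := by
    have hco := congrArg (fun g => Polynomial.coeff g 0) hrmod
    simpa [coeff_map, hv, coeff_X_pow, (Ne.symm hm0)] using hco
  have habs : ((2 * (p %ₘ f).coeff 0 : ℤ) : ℚ) = 1 := by push_cast; rw [hc0]; norm_num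
  have habs' : (2 * (p %ₘ f).coeff 0 : ℤ) = 1 := by exact_mod_cast habs
  omega
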